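/- Second Cassini identity for Horadam octonions: for all n ≥ 1, OG_{n+1} ∘ OG_{n−1} − OG_n ∘ OG_n = (A·B·(α·β)^{n−1}·(β·(β̲ ∘ α̲) − α·(α̲ ∘ β̲)))/(α − β). -/

import Mathlib

open Quaternion

/-- The real octonions, via the Cayley–Dickson construction on the quaternions. -/
def Octonion : Type := ℍ[ℝ] × ℍ[ℝ]

namespace Octonion

noncomputable instance : AddCommGroup Octonion := inferInstanceAs (AddCommGroup (ℍ[ℝ] × ℍ[ℝ]))
noncomputable instance : Module ℝ Octonion := inferInstanceAs (Module ℝ (ℍ[ℝ] × ℍ[ℝ]))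

/-- Cayley–Dickson multiplication. -/
noncomputable instance : Mul Octonion :=
  ⟨fun x y =>
    let a := (x : ℍ[ℝ] × ℍ[ℝ]); let b := (y : ℍ[ℝ] × ℍ[ℝ])
    ((a.1 * b.1 - star b.2 * a.2, b.2 * a.1 + a.2 * star b.1) : ℍ[ℝ] × ℍ[ℝ])⟩

noncomputable instance : One Octonion := ⟨(((1 : ℍ[ℝ]), (0 : ℍ[ℝ])) : ℍ[ℝ] × ℍ[ℝ])⟩

/-- Octonion conjugation. -/
noncomputable def conj (x : Octonion) : Octonion :=
  ((star (x : ℍ[ℝ] × ℍ[ℝ]).1, -(x : ℍ[ℝ] × ℍ[ℝ]).2) : ℍ[ℝ] × ℍ[ℝ])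

/-- The standard basis `e 0 = 1, e 1, …, e 7` of the octonions. -/
noncomputable def e : Fin 8 → Octonion
  | 0 => (((1 : ℍ[ℝ]), 0) : ℍ[ℝ] × ℍ[ℝ])
  | 1 => (((⟨0,1,0,0⟩ : ℍ[ℝ]), 0) : ℍ[ℝ] × ℍ[ℝ])
  | 2 => (((⟨0,0,1,0⟩ : ℍ[ℝ]), 0) : ℍ[ℝ] × ℍ[ℝ])
  | 3 => (((⟨0,0,0,1⟩ : ℍ[ℝ]), 0) : ℍ[ℝ] × ℍ[ℝ])
  | 4 => ((0, (1 : ℍ[ℝ])) : ℍ[ℝ] × ℍ[ℝ])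
  | 5 => ((0, (⟨0,1,0,0⟩ : ℍ[ℝ])) : ℍ[ℝ] × ℍ[ℝ])
  | 6 => ((0, (⟨0,0,1,0⟩ : ℍ[ℝ])) : ℍ[ℝ] × ℍ[ℝ])
  | 7 => ((0, (⟨0,0,0,1⟩ : ℍ[ℝ])) : ℍ[ℝ] × ℍ[ℝ])

end Octonion

namespace Octonion

lemma omul_def (x y : Octonion) :
    x * y = ((((x : ℍ[ℝ] × ℍ[ℝ]).1 * (y : ℍ[ℝ] × ℍ[ℝ]).1
        - star (y : ℍ[ℝ] × ℍ[ℝ]).2 * (x : ℍ[ℝ] × ℍ[ℝ]).2,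
      (y : ℍ[ℝ] × ℍ[ℝ]).2 * (x : ℍ[ℝ] × ℍ[ℝ]).1
        + (x : ℍ[ℝ] × ℍ[ℝ]).2 * star (y : ℍ[ℝ] × ℍ[ℝ]).1) : ℍ[ℝ] × ℍ[ℝ])) := rfl

noncomputable instance : NoZeroSMulDivisors ℝ Octonion :=
  inferInstanceAs (NoZeroSMulDivisors ℝ (ℍ[ℝ] × ℍ[ℝ]))

lemma osub_def (x y : Octonion) :
    x - y = ((((x : ℍ[ℝ] × ℍ[ℝ]).1 - (y : ℍ[ℝ] × ℍ[ℝ]).1,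
      (x : ℍ[ℝ] × ℍ[ℝ]).2 - (y : ℍ[ℝ] × ℍ[ℝ]).2) : ℍ[ℝ] × ℍ[ℝ])) := rfl

lemma osmul_def (r : ℝ) (x : Octonion) :
    r • x = (((r • (x : ℍ[ℝ] × ℍ[ℝ]).1, r • (x : ℍ[ℝ] × ℍ[ℝ]).2) : ℍ[ℝ] × ℍ[ℝ])) := rfl

lemma sub_omul (x y z : Octonion) : (x - y) * z = x * z - y * z := by
  show (_ : ℍ[ℝ] × ℍ[ℝ]) = _
  simp only [omul_def]
  simp only [osub_def, Prod.mk.injEq]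
  exact Prod.ext (by show _ = _ - _; noncomm_ring) (by show _ = _ - _; noncomm_ring)

lemma omul_sub (x y z : Octonion) : x * (y - z) = x * y - x * z := by
  show (_ : ℍ[ℝ] × ℍ[ℝ]) = _
  simp only [omul_def]
  simp only [osub_def, Prod.mk.injEq, star_sub]
  exact Prod.ext (by show _ = _ - _; noncomm_ring) (by show _ = _ - _; noncomm_ring)

lemma smul_omul (r : ℝ) (x y : Octonion) : (r • x) * y = r • (x * y) := by
  simp only [omul_def]
  simp only [osmul_def, Prod.mk.injEq, smul_sub, smul_add,
    smul_mul_assoc, mul_smul_comm]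
  exact Prod.ext (by show _ = r • _; rw [smul_sub]) (by show _ = r • _; rw [smul_add])

lemma omul_smul (r : ℝ) (x y : Octonion) : x * (r • y) = r • (x * y) := by
  simp only [omul_def]
  simp only [osmul_def, Prod.mk.injEq, Quaternion.star_smul, smul_sub,
    smul_add, smul_mul_assoc, mul_smul_comm]
  exact Prod.ext (by show _ = r • _; rw [smul_sub]) (by show _ = r • _; rw [smul_add])

end Octonion

/-- Second Cassini identity for Horadam octonions. -/
theorem horadam_octonion_cassini_two (p q a b : ℝ) (hpq : p ^ 2 + 4 * q > 0)
    (α β A B : ℝ)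
    (hα : α = (p + Real.sqrt (p ^ 2 + 4 * q)) / 2)
    (hβ : β = (p - Real.sqrt (p ^ 2 + 4 * q)) / 2)
    (hA : A = b - a * β) (hB : B = b - a * α)
    (w : ℕ → ℝ) (h0 : w 0 = a) (h1 : w 1 = b)
    (hrec : ∀ n, w (n + 2) = p * w (n + 1) + q * w n)
    (OG : ℕ → Octonion)
    (hOG : ∀ n, OG n = ∑ i : Fin 8, w (n + (i : ℕ)) • Octonion.e i)
    (au bu : Octonion)
    (hau : au = ∑ i : Fin 8, α ^ (i : ℕ) • Octonion.e i)
    (hbu : bu = ∑ i : Fin 8, β ^ (i : ℕ) • Octonion.e i) :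
    ∀ n : ℕ, 1 ≤ n →
      OG (n + 1) * OG (n - 1) - OG n * OG n =
        ((A * B * (α * β) ^ (n - 1)) / (α - β)) • (β • (bu * au) - α • (au * bu)) := by
  have hs : Real.sqrt (p ^ 2 + 4 * q) ^ 2 = p ^ 2 + 4 * q := Real.sq_sqrt hpq.le
  have hspos : 0 < Real.sqrt (p ^ 2 + 4 * q) := Real.sqrt_pos.mpr hpq
  have hne : α - β ≠ 0 := by rw [hα, hβ]; intro h; nlinarith
  have hα2 : α ^ 2 = p * α + q := by rw [hα]; linear_combination hs / 4
  have hβ2 : β ^ 2 = p * β + q := by rw [hβ]; linear_combination hs / 4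
  -- Binet formula
  have binet : ∀ n, (α - β) * w n = A * α ^ n - B * β ^ n := by
    have key : ∀ n, (α - β) * w n = A * α ^ n - B * β ^ n ∧
        (α - β) * w (n + 1) = A * α ^ (n + 1) - B * β ^ (n + 1) := by
      intro n
      induction n with
      | zero =>
        constructor
        · simp only [pow_zero, h0, hA, hB]; ring
        · simp only [pow_one, h1, hA, hB]; ring
      | succ k ih =>
        refine ⟨ih.2, ?_⟩
        have := hrec k
        have e1 := ih.1
        have e2 := ih.2
        calc (α - β) * w (k + 1 + 1) = p * ((α - β) * w (k + 1)) + q * ((α - β) * w k) := by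
              rw [this]; ring
          _ = p * (A * α ^ (k + 1) - B * β ^ (k + 1)) + q * (A * α ^ k - B * β ^ k) := by
              rw [e1, e2]
          _ = A * α ^ k * (p * α + q) - B * β ^ k * (p * β + q) := by ring
          _ = A * α ^ (k + 1 + 1) - B * β ^ (k + 1 + 1) := by
              rw [← hα2, ← hβ2]; ring
    exact fun n => (key n).1
  -- scaled Binet for octonions
  have hOG' : ∀ n, (α - β) • OG n = (A * α ^ n) • au - (B * β ^ n) • bu := by
    intro n
    rw [hOG, hau, hbu, Finset.smul_sum, Finset.smul_sum, Finset.smul_sum,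
      ← Finset.sum_sub_distrib]
    refine Finset.sum_congr rfl fun i _ => ?_
    rw [smul_smul, smul_smul, smul_smul, ← sub_smul]
    congr 1
    rw [binet (n + i), pow_add, pow_add]
    ring
  intro n hn
  obtain ⟨m, rfl⟩ : ∃ m, n = m + 1 := ⟨n - 1, (Nat.succ_pred_eq_of_pos hn).symm⟩
  simp only [Nat.add_sub_cancel]
  have hr : ((α - β) ^ 2) ≠ 0 := pow_ne_zero _ hne
  have sqmul : ∀ x y : Octonion, ((α - β) ^ 2) • (x * y) = ((α - β) • x) * ((α - β) • y) := by
    intro x y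
    rw [Octonion.smul_omul, Octonion.omul_smul, smul_smul, ← pow_two]
  refine smul_right_injective Octonion hr ?_
  show (α - β) ^ 2 • (OG (m + 1 + 1) * OG m - OG (m + 1) * OG (m + 1)) =
    (α - β) ^ 2 • ((A * B * (α * β) ^ m / (α - β)) • (β • (bu * au) - α • (au * bu)))
  rw [smul_sub, sqmul, sqmul, hOG' (m + 1 + 1), hOG' m, hOG' (m + 1), smul_smul]
  have hc : (α - β) ^ 2 * (A * B * (α * β) ^ m / (α - β)) = (α - β) * (A * B * (α * β) ^ m) := by
    field_simp
  rw [hc]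
  simp only [Octonion.sub_omul, Octonion.omul_sub, Octonion.smul_omul, Octonion.omul_smul,
    smul_smul, smul_sub]
  have e2 : α ^ (m + 1 + 1) = α ^ m * α ^ 2 := by ring
  have f2 : β ^ (m + 1 + 1) = β ^ m * β ^ 2 := by ring
  module
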